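/- The Calvo-pricing inflation recursion (perfect-foresight version): Let ρ ∈ (0,1] and γ ∈ (0,1), let q : ℤ → ℝ be a bounded sequence (the optimal reset log-prices), and let p : ℤ → ℝ satisfy, for every t ∈ ℤ, p(t) = ρ(1−γ) Σ_{s=0}^{∞} γ^s q(t+s) + (1−ρ) p(t−1), where the series converges since q is bounded and 0 < γ < 1. Define inflation π(t) = p(t) − p(t−1). Then for every t ∈ ℤ, π(t) = (ρ(1−γ)/(1−ργ)) (q(t) − p(t−1)) + (γ/(1−ργ)) π(t+1). -/

import Mathlib

/-- The Calvo-pricing inflation recursion (perfect-foresight version): if the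
aggregate log price level satisfies
`p t = ρ(1-γ) ∑_{s≥0} γ^s q(t+s) + (1-ρ) p(t-1)` for all `t`, with `q` bounded
and `ρ ∈ (0,1]`, `γ ∈ (0,1)`, then inflation `π t = p t - p (t-1)` satisfies
`π t = (ρ(1-γ)/(1-ργ)) (q t - p (t-1)) + (γ/(1-ργ)) π (t+1)`. -/
theorem calvo_inflation_recursion
    (ρ γ : ℝ) (hρ0 : 0 < ρ) (hρ1 : ρ ≤ 1) (hγ0 : 0 < γ) (hγ1 : γ < 1)
    (q p : ℤ → ℝ) (hq_bdd : ∃ M : ℝ, ∀ t : ℤ, |q t| ≤ M)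
    (hp : ∀ t : ℤ, p t
      = ρ * (1 - γ) * (∑' s : ℕ, γ ^ s * q (t + s)) + (1 - ρ) * p (t - 1)) :
    ∀ t : ℤ, p t - p (t - 1)
      = (ρ * (1 - γ) / (1 - ρ * γ)) * (q t - p (t - 1))
        + (γ / (1 - ρ * γ)) * (p (t + 1) - p t) := by
  obtain ⟨M, hM⟩ := hq_bdd
  have hsum : ∀ t : ℤ, Summable (fun s : ℕ => γ ^ s * q (t + s)) := by
    intro t
    apply Summable.of_norm_bounded (g := fun s : ℕ => M * γ ^ s)
      ((summable_geometric_of_lt_one hγ0.le hγ1).mul_left M)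
    intro s
    have h1 : |γ ^ s * q (t + s)| = γ ^ s * |q (t + s)| := by
      rw [abs_mul, abs_of_nonneg (pow_nonneg hγ0.le s)]
    rw [Real.norm_eq_abs, h1, mul_comm M (γ ^ s)]
    exact mul_le_mul_of_nonneg_left (hM _) (pow_nonneg hγ0.le s)
  intro t
  have hshift : (∑' s : ℕ, γ ^ s * q (t + s))
      = q t + γ * ∑' s : ℕ, γ ^ s * q (t + 1 + s) := by
    rw [Summable.tsum_eq_zero_add (hsum t), ← tsum_mul_left]
    congr 1
    · simp
    · refine tsum_congr fun n => ?_
      push_cast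
      ring
  have hne : (1 : ℝ) - ρ * γ ≠ 0 := by nlinarith
  have hpt := hp t
  have hpt1 := hp (t + 1)
  simp only [add_sub_cancel_right] at hpt1
  have key : (1 - ρ * γ) * (p t - p (t - 1))
      = ρ * (1 - γ) * (q t - p (t - 1)) + γ * (p (t + 1) - p t) := by
    linear_combination hpt - γ * hpt1 + ρ * (1 - γ) * hshift
  field_simp
  linarith [key]
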